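/- For every nonnegative integer m and every real (or rational function field element) a, ∑_{i+j+k=m} [m!/(i! j! k!)] · (-m)_i · (-m - 1/2)_j · (j + 1/2)_k · ((a+1)/2)^j · ((1-a)/2)^k = ∑_{i+j=m} [m!/(i! j!)] · (1/2 - j)_j · (m+1)_i · ((-a-1)/2)^i, where (x)_n denotes the rising factorial. -/

import Mathlib

set_option maxHeartbeats 2000000

open Finset

lemma poch_eval_prod (x : ℝ) (n : ℕ) :
    (ascPochhammer ℝ n).eval x = ∏ i ∈ range n, (x + i) := by
  induction n with
  | zero => simp
  | succ k ih => rw [ascPochhammer_succ_eval, prod_range_succ, ih]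

lemma prod_cast_factorial (b c : ℕ) :
    (∏ t ∈ range c, ((b:ℝ) + 1 + t)) * b.factorial = (b+c).factorial := by
  induction c with
  | zero => simp
  | succ k ih =>
    rw [prod_range_succ, show b + (k+1) = (b+k)+1 from rfl, Nat.factorial_succ]
    push_cast
    push_cast at ih
    linear_combination ((b:ℝ)+1+k) * ih

lemma HP_fact (n : ℕ) :
    (∏ i ∈ range n, ((i:ℝ) + 1/2)) * 4^n * n.factorial = (2*n).factorial := by
  induction n with
  | zero => simp
  | succ k ih =>
    rw [prod_range_succ, show 2*(k+1) = (2*k)+1+1 from rfl, Nat.factorial_succ,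
      Nat.factorial_succ, Nat.factorial_succ]
    push_cast
    push_cast at ih
    linear_combination (4*((k:ℝ)+1/2)*((k:ℝ)+1)) * ih

lemma fact_ne' (n : ℕ) : ((n.factorial : ℝ)) ≠ 0 := by
  exact_mod_cast n.factorial_ne_zero

lemma pochP5 (m i : ℕ) :
    (ascPochhammer ℝ i).eval ((m:ℝ)+1) = (m+i).factorial / m.factorial := by
  rw [eq_div_iff (fact_ne' m), poch_eval_prod]
  exact_mod_cast prod_cast_factorial m i

lemma pochP1' (n i : ℕ) :
    (ascPochhammer ℝ i).eval (-((n+i:ℕ):ℝ)) = (-1)^i * (n+i).factorial / n.factorial := by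
  rw [eq_div_iff (fact_ne' _), poch_eval_prod]
  have h2 : ∏ t ∈ range i, (-((n+i:ℕ):ℝ) + t) = ∏ t ∈ range i, ((-1) * ((n:ℝ) + 1 + t)) := by
    rw [← prod_range_reflect]
    refine prod_congr rfl fun t ht => ?_
    simp only [mem_range] at ht
    have h3 : ((i - 1 - t : ℕ) : ℝ) = (i:ℝ) - 1 - t := by
      have h4 : i - 1 - t = i - (1 + t) := by omega
      rw [h4]
      have := Nat.cast_sub (by omega : 1 + t ≤ i) (R := ℝ)
      push_cast at this ⊢; linarith
    rw [h3]; push_cast; ring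
  rw [h2, prod_mul_distrib, prod_const, card_range, mul_assoc, prod_cast_factorial]

lemma pochP4 (n : ℕ) :
    (ascPochhammer ℝ n).eval ((1:ℝ)/2 - (n:ℝ)) = (-1)^n * (2*n).factorial / (4^n * n.factorial) := by
  have h4 : (4:ℝ)^n ≠ 0 := by positivity
  rw [eq_div_iff (by positivity), poch_eval_prod]
  have h2 : ∏ t ∈ range n, ((1:ℝ)/2 - (n:ℕ) + t) = ∏ t ∈ range n, ((-1) * ((t:ℝ) + 1/2)) := by
    rw [← prod_range_reflect]
    refine prod_congr rfl fun t ht => ?_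
    simp only [mem_range] at ht
    have h3 : ((n - 1 - t : ℕ) : ℝ) = (n:ℝ) - 1 - t := by
      have h4 : n - 1 - t = n - (1 + t) := by omega
      rw [h4]
      have := Nat.cast_sub (by omega : 1 + t ≤ n) (R := ℝ)
      push_cast at this ⊢; linarith
    rw [h3]; ring
  rw [h2, prod_mul_distrib, prod_const, card_range]
  have := HP_fact n
  linear_combination ((-1:ℝ))^n * this

lemma pochP3 (j k : ℕ) :
    (ascPochhammer ℝ k).eval ((j:ℝ) + 1/2)
      = (2*(j+k)).factorial * j.factorial / (4^k * (j+k).factorial * (2*j).factorial) := by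
  have h1 := HP_fact j
  have h2 := HP_fact (j+k)
  have key : (∏ i ∈ range j, ((i:ℝ) + 1/2)) * (ascPochhammer ℝ k).eval ((j:ℝ) + 1/2)
      = ∏ i ∈ range (j+k), ((i:ℝ) + 1/2) := by
    rw [poch_eval_prod, prod_range_add]
    congr 1
    exact prod_congr rfl fun t _ => by push_cast; ring
  rw [eq_div_iff (by positivity)]
  rw [← key] at h2
  linear_combination (-((ascPochhammer ℝ k).eval ((j:ℝ) + 1/2) * 4^k * ((j+k).factorial:ℝ))) * h1
    + (j.factorial:ℝ) * h2

lemma poch_succ_left_eval (j : ℕ) (x : ℝ) :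
    (ascPochhammer ℝ (j+1)).eval x = x * (ascPochhammer ℝ j).eval (x+1) := by
  rw [ascPochhammer_succ_left, Polynomial.eval_mul, Polynomial.eval_X, Polynomial.eval_comp,
    Polynomial.eval_add, Polynomial.eval_X, Polynomial.eval_one]

lemma pochP2' (n j : ℕ) :
    (ascPochhammer ℝ j).eval (-((n+j:ℕ):ℝ) - 1/2)
      = (-1)^j * (2*(n+j)+1).factorial * n.factorial
        / (4^j * (n+j).factorial * (2*n+1).factorial) := by
  induction j with
  | zero =>
    simp only [Nat.add_zero, pow_zero, one_mul, ascPochhammer_zero, Polynomial.eval_one]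
    rw [eq_comm, div_eq_one_iff_eq (by positivity)]
    ring
  | succ k ih =>
    rw [poch_succ_left_eval]
    have hx : (-((n+(k+1):ℕ):ℝ) - 1/2) + 1 = -((n+k:ℕ):ℝ) - 1/2 := by push_cast; ring
    rw [hx, ih]
    have e2 : ((2*(n+(k+1))+1).factorial : ℝ)
        = (2*(n+k)+1).factorial * ((2*(n+k)+2) * (2*(n+k)+3)) := by
      rw [show 2*(n+(k+1))+1 = ((2*(n+k)+1)+1)+1 from by omega, Nat.factorial_succ,
        Nat.factorial_succ]
      push_cast; ring
    have e4 : ((n+(k+1)).factorial : ℝ) = (n+k).factorial * (n+k+1) := by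
      rw [show n+(k+1) = (n+k)+1 from rfl, Nat.factorial_succ]; push_cast; ring
    rw [e2, e4]
    have h1 : ((n+k).factorial : ℝ) ≠ 0 := fact_ne' _
    have h2 : ((2*n+1).factorial : ℝ) ≠ 0 := fact_ne' _
    have h3 : (4:ℝ)^k ≠ 0 := by positivity
    field_simp
    push_cast
    ring

lemma sum_range_interleave {M : Type*} [AddCommMonoid M] (f : ℕ → M) (n : ℕ) :
    ∑ i ∈ range (2*n), f i = ∑ j ∈ range n, (f (2*j) + f (2*j+1)) := by
  induction n with
  | zero => simp
  | succ k ih =>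
    rw [show 2*(k+1) = (2*k)+1+1 from rfl, sum_range_succ, sum_range_succ, ih, sum_range_succ,
      add_assoc]

lemma even_choose (r : ℕ) : ∑ j ∈ range (r+1), (2*r+1).choose (2*j) = 4^r := by
  have h1 : ∑ i ∈ range (2*(r+1)), (2*r+1).choose i = 2^(2*r+1) := by
    rw [show 2*(r+1) = (2*r+1)+1 from by omega]; exact Nat.sum_range_choose _
  rw [sum_range_interleave] at h1
  have h2 : ∑ j ∈ range (r+1), (2*r+1).choose (2*j+1) = ∑ j ∈ range (r+1), (2*r+1).choose (2*j) := by
    rw [← sum_range_reflect]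
    refine sum_congr rfl fun j hj => ?_
    simp only [mem_range] at hj
    rw [show 2*(r+1-1-j)+1 = 2*r+1 - 2*j from by omega]
    exact Nat.choose_symm (by omega)
  rw [sum_add_distrib, h2] at h1
  have h3 : (2:ℕ)^(2*r+1) = 2 * 4^r := by
    rw [pow_succ, pow_mul]; ring
  omega

lemma identI1 (n : ℕ) : ∀ r : ℕ,
    ∑ u ∈ range (n+1), ((-1:ℝ)^u * 4^(n-u) * (n.choose u) * ((2*(r+u)).choose (r+u)))
      = (2*r).factorial * (2*n).factorial / (r.factorial * n.factorial * (n+r).factorial) := by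
  induction n with
  | zero =>
    intro r
    rw [sum_range_one]
    have hc : (((2*(r+0)).choose (r+0) : ℕ) : ℝ) = (2*r).factorial / (r.factorial * r.factorial) := by
      rw [Nat.add_zero, Nat.cast_choose ℝ (by omega : r ≤ 2*r), show 2*r - r = r from by omega]
    rw [hc]
    simp [Nat.factorial]
  | succ n ih =>
    intro r
    rw [sum_range_succ']
    have hsplit : ∀ i ∈ range (n+1),
        ((-1:ℝ)^(i+1) * 4^(n+1-(i+1)) * ((n+1).choose (i+1)) * ((2*(r+(i+1))).choose (r+(i+1))))
        = -((-1:ℝ)^i * 4^(n-i) * (n.choose i) * ((2*((r+1)+i)).choose ((r+1)+i)))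
          + -((-1:ℝ)^i * 4^(n-i) * (n.choose (i+1)) * ((2*(r+(i+1))).choose (r+(i+1)))) := by
      intro i _
      rw [Nat.choose_succ_succ]
      have e1 : n+1-(i+1) = n-i := by omega
      have e2 : r+(i+1) = (r+1)+i := by omega
      rw [e1, e2]
      push_cast
      ring
    rw [sum_congr rfl hsplit, sum_add_distrib]
    have hS1 : ∑ i ∈ range (n+1),
        -((-1:ℝ)^i * 4^(n-i) * (n.choose i) * ((2*((r+1)+i)).choose ((r+1)+i)))
        = -((2*(r+1)).factorial * (2*n).factorial
            / ((r+1).factorial * n.factorial * (n+(r+1)).factorial)) := by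
      rw [sum_neg_distrib, ih (r+1)]
    set g : ℕ → ℝ := fun u => (-1)^u * 4^(n-u) * (n.choose u) * ((2*(r+u)).choose (r+u)) with hg
    have hterm : ∀ i ∈ range (n+1),
        -((-1:ℝ)^i * 4^(n-i) * (n.choose (i+1)) * ((2*(r+(i+1))).choose (r+(i+1))))
          = 4 * g (i+1) := by
      intro i hi
      simp only [mem_range] at hi
      by_cases hin : i = n
      · subst hin
        simp [hg, Nat.choose_succ_self]
      · have hexp : n - (i+1) + 1 = n - i := by omega
        simp only [hg]
        rw [← hexp, pow_succ]
        push_cast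
        ring
    have hS2 : ∑ i ∈ range (n+1),
        -((-1:ℝ)^i * 4^(n-i) * (n.choose (i+1)) * ((2*(r+(i+1))).choose (r+(i+1))))
        = 4 * ((2*r).factorial * (2*n).factorial
            / (r.factorial * n.factorial * (n+r).factorial)) - 4^(n+1) * ((2*r).choose r) := by
      rw [sum_congr rfl hterm, ← mul_sum]
      have hgsum : ∑ i ∈ range (n+1), g (i+1) = ∑ u ∈ range (n+2), g u - g 0 := by
        rw [eq_sub_iff_add_eq, ← sum_range_succ']
      rw [hgsum, sum_range_succ]
      have hgn1 : g (n+1) = 0 := by simp [hg, Nat.choose_succ_self]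
      rw [hgn1, add_zero, ih r]
      simp only [hg, Nat.sub_zero, Nat.choose_zero_right, Nat.cast_one, Nat.add_zero, pow_succ]
      push_cast
      ring
    rw [hS1, hS2]
    simp only [Nat.add_zero, Nat.sub_zero, pow_zero, Nat.choose_zero_right, Nat.cast_one,
      one_mul, mul_one]
    have hchoose : (((2*r).choose r : ℕ) : ℝ) = (2*r).factorial / (r.factorial * r.factorial) := by
      rw [Nat.cast_choose ℝ (by omega : r ≤ 2*r), show 2*r - r = r from by omega]
    rw [hchoose]
    have e1 : ((2*(r+1)).factorial : ℝ) = (2*r).factorial * ((2*r+1)*(2*r+2)) := by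
      rw [show 2*(r+1) = ((2*r)+1)+1 from by omega, Nat.factorial_succ, Nat.factorial_succ]
      push_cast; ring
    have e2 : (((r+1).factorial : ℕ) : ℝ) = r.factorial * (r+1) := by
      rw [Nat.factorial_succ]; push_cast; ring
    have e3 : ((n+(r+1)).factorial : ℝ) = (n+r).factorial * (n+r+1) := by
      rw [show n+(r+1) = (n+r)+1 from by omega, Nat.factorial_succ]; push_cast; ring
    have e4 : ((2*(n+1)).factorial : ℝ) = (2*n).factorial * ((2*n+1)*(2*n+2)) := by
      rw [show 2*(n+1) = ((2*n)+1)+1 from by omega, Nat.factorial_succ, Nat.factorial_succ]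
      push_cast; ring
    have e5 : (((n+1).factorial : ℕ) : ℝ) = n.factorial * (n+1) := by
      rw [Nat.factorial_succ]; push_cast; ring
    have e6 : ((n+1+r).factorial : ℝ) = (n+r).factorial * (n+r+1) := by
      rw [show n+1+r = (n+r)+1 from by omega, Nat.factorial_succ]; push_cast; ring
    rw [e1, e2, e3, e4, e5, e6]
    have f1 : ((2*r).factorial : ℝ) ≠ 0 := by exact_mod_cast (2*r).factorial_ne_zero
    have f2 : (r.factorial : ℝ) ≠ 0 := by exact_mod_cast r.factorial_ne_zero
    have f3 : (n.factorial : ℝ) ≠ 0 := by exact_mod_cast n.factorial_ne_zero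
    have f4 : ((n+r).factorial : ℝ) ≠ 0 := by exact_mod_cast (n+r).factorial_ne_zero
    have f5 : ((2*n).factorial : ℝ) ≠ 0 := by exact_mod_cast (2*n).factorial_ne_zero
    field_simp
    ring

lemma fact_succ_cast (n : ℕ) : ((n+1).factorial : ℝ) = (n.factorial : ℝ) * ((n:ℝ)+1) := by
  rw [Nat.factorial_succ]; push_cast; ring

lemma fact_succ2_cast (n : ℕ) : ((n+2).factorial : ℝ)
    = (n.factorial : ℝ) * (((n:ℝ)+1)*((n:ℝ)+2)) := by
  rw [show n+2 = (n+1)+1 from rfl, Nat.factorial_succ, Nat.factorial_succ]; push_cast; ring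

lemma identI2 (r : ℕ) (m : ℕ) (hm : r ≤ m) :
    ∑ j ∈ range (r+1),
        ((m-j).factorial : ℝ) / ((r-j).factorial * (2*j).factorial * (2*(m-j)+1).factorial)
      = 4^r * (m+r).factorial / ((2*r).factorial * (2*m+1).factorial) := by
  induction m, hm using Nat.le_induction with
  | base =>
    have key : ∀ j ∈ range (r+1),
        ((r-j).factorial : ℝ) / ((r-j).factorial * (2*j).factorial * (2*(r-j)+1).factorial)
          = ((2*r+1).choose (2*j) : ℝ) / (2*r+1).factorial := by
      intro j hj
      simp only [mem_range] at hj
      have hc := Nat.choose_mul_factorial_mul_factorial (show 2*j ≤ 2*r+1 by omega)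
      rw [show 2*r+1-2*j = 2*(r-j)+1 from by omega] at hc
      have hcR : ((2*r+1).choose (2*j) : ℝ) * (2*j).factorial * (2*(r-j)+1).factorial
          = (2*r+1).factorial := by exact_mod_cast hc
      rw [div_eq_div_iff (by positivity) (by positivity)]
      linear_combination (-((r-j).factorial : ℝ)) * hcR
    rw [sum_congr rfl key, ← sum_div, ← Nat.cast_sum, even_choose]
    rw [show r + r = 2*r from by omega]
    have := fact_ne' (2*r)
    have := fact_ne' (2*r+1)
    push_cast
    field_simp
  | succ m hm ih =>
    set u1 : ℕ → ℝ := fun j =>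
      ((m+1-j).factorial : ℝ) / ((r-j).factorial * (2*j).factorial * (2*(m+1-j)+1).factorial)
      with hu1
    set u0 : ℕ → ℝ := fun j =>
      ((m-j).factorial : ℝ) / ((r-j).factorial * (2*j).factorial * (2*(m-j)+1).factorial)
      with hu0
    set g : ℕ → ℝ := fun j => if j = 0 then 0 else
      -(((m+1-j).factorial : ℝ) / ((r-j).factorial * (2*j-2).factorial * (2*(m+1-j)+1).factorial))
      with hgdef
    have tele : ∀ j, j < r →
        ((2*m+2)*(2*m+3)) * u1 j - ((m:ℝ)+1+(r:ℝ)) * u0 j = g (j+1) - g j := by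
      intro j hj
      rcases Nat.eq_zero_or_pos j with hj0 | hjpos
      · subst hj0
        obtain ⟨c, rfl⟩ : ∃ c, r = c+1 := ⟨r-1, by omega⟩
        obtain ⟨d, rfl⟩ : ∃ d, m = c+1+d := ⟨m-(c+1), by omega⟩
        simp only [hu1, hu0, hgdef, if_pos rfl, if_neg one_ne_zero]
        rw [show c+1+d+1-0 = (c+d+1)+1 from by omega,
            show c+1+d-0 = c+d+1 from by omega,
            show c+1-0 = c+1 from by omega,
            show c+1-1 = c from by omega,
            show 2*0 = 0 from rfl, show 2*1-2 = 0 from rfl,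
            show 2*((c+d+1)+1)+1 = (2*(c+d)+3)+2 from by omega,
            show 2*(c+d+1)+1 = 2*(c+d)+3 from by omega]
        rw [fact_succ_cast (c+d+1), fact_succ2_cast (2*(c+d)+3), fact_succ_cast c]
        have n1 := fact_ne' (c+d+1); have n2 := fact_ne' (2*(c+d)+3); have n3 := fact_ne' c
        have p1 : ((c:ℝ)+1) ≠ 0 := by positivity
        field_simp
        push_cast
        field_simp
        ring
      · obtain ⟨t, rfl⟩ : ∃ t, j = t+1 := ⟨j-1, by omega⟩
        obtain ⟨c, rfl⟩ : ∃ c, r = t+c+2 := ⟨r-(t+2), by omega⟩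
        obtain ⟨e, rfl⟩ : ∃ e, m = t+c+e+2 := ⟨m-(t+c+2), by omega⟩
        simp only [hu1, hu0, hgdef, if_neg (Nat.succ_ne_zero t), if_neg (Nat.succ_ne_zero (t+1))]
        rw [show t+c+e+2+1-(t+1) = (c+e+1)+1 from by omega,
            show t+c+e+2-(t+1) = c+e+1 from by omega,
            show t+c+2-(t+1) = c+1 from by omega,
            show t+c+2-(t+1+1) = c from by omega,
            show 2*(t+1)-2 = 2*t from by omega,
            show 2*(t+1+1)-2 = 2*t+2 from by omega,
            show 2*(t+1) = 2*t+2 from by omega,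
            show 2*((c+e+1)+1)+1 = (2*(c+e)+3)+2 from by omega,
            show 2*(c+e+1)+1 = 2*(c+e)+3 from by omega,
            show t+c+e+2+1-(t+1+1) = c+e+1 from by omega]
        rw [fact_succ_cast (c+e+1), fact_succ2_cast (2*(c+e)+3), fact_succ2_cast (2*t),
          fact_succ_cast c]
        have n1 := fact_ne' (c+e+1); have n2 := fact_ne' (2*(c+e)+3)
        have n3 := fact_ne' (2*t); have n4 := fact_ne' c
        field_simp
        push_cast
        ring
    have last : ((2*m+2)*(2*m+3)) * u1 r - ((m:ℝ)+1+(r:ℝ)) * u0 r = - g r := by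
      rcases Nat.eq_zero_or_pos r with hr0 | hrpos
      · subst hr0
        simp only [hu1, hu0, hgdef, if_pos rfl]
        rw [show m+1-0 = m+1 from by omega, show m-0 = m from by omega,
          show 2*0 = 0 from rfl, show 2*(m+1)+1 = (2*m+1)+2 from by omega,
          show 0-0 = 0 from rfl]
        rw [fact_succ_cast m, fact_succ2_cast (2*m+1)]
        have n1 := fact_ne' m; have n2 := fact_ne' (2*m+1)
        field_simp
        push_cast; ring
      · obtain ⟨t, rfl⟩ : ∃ t, r = t+1 := ⟨r-1, by omega⟩
        obtain ⟨e, rfl⟩ : ∃ e, m = t+1+e := ⟨m-(t+1), by omega⟩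
        simp only [hu1, hu0, hgdef, if_neg (Nat.succ_ne_zero t)]
        rw [show t+1+e+1-(t+1) = e+1 from by omega,
            show t+1+e-(t+1) = e from by omega,
            show t+1-(t+1) = 0 from by omega,
            show 2*(t+1)-2 = 2*t from by omega,
            show 2*(t+1) = (2*t)+2 from by omega,
            show 2*(e+1)+1 = (2*e+1)+2 from by omega,
            show 2*e+1 = 2*e+1 from rfl]
        rw [fact_succ_cast e, fact_succ2_cast (2*e+1), fact_succ2_cast (2*t)]
        have n1 := fact_ne' e; have n2 := fact_ne' (2*e+1); have n3 := fact_ne' (2*t)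
        field_simp
        push_cast
        ring
    have main : ((2*m+2)*(2*m+3)) * (∑ j ∈ range (r+1), u1 j)
        = ((m:ℝ)+1+(r:ℝ)) * (∑ j ∈ range (r+1), u0 j) := by
      have h1 : ∑ j ∈ range (r+1), (((2*m+2)*(2*m+3)) * u1 j - ((m:ℝ)+1+(r:ℝ)) * u0 j) = 0 := by
        rw [sum_range_succ]
        rw [sum_congr rfl (fun j hj => tele j (mem_range.mp hj)), sum_range_sub g, last]
        simp [hgdef]
      rw [sum_sub_distrib, sub_eq_zero, ← mul_sum, ← mul_sum] at h1
      exact h1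
    have hsum1 : ∑ j ∈ range (r+1), u1 j
        = ((m:ℝ)+1+(r:ℝ)) * (4^r * (m+r).factorial / ((2*r).factorial * (2*m+1).factorial))
          / ((2*m+2)*(2*m+3)) := by
      rw [← ih]
      rw [eq_div_iff (by positivity)]
      linear_combination main
    rw [hsum1, ih] at *
    have e1 : ((m+1+r).factorial : ℝ) = (m+r).factorial * ((m:ℝ)+(r:ℝ)+1) := by
      rw [show m+1+r = (m+r)+1 from by omega, fact_succ_cast]; push_cast; ring
    have e2 : ((2*(m+1)+1).factorial : ℝ)
        = (2*m+1).factorial * ((2*(m:ℝ)+2)*(2*(m:ℝ)+3)) := by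
      rw [show 2*(m+1)+1 = (2*m+1)+2 from by omega, fact_succ2_cast]; push_cast; ring
    rw [e1, e2]
    have n1 := fact_ne' (m+r); have n2 := fact_ne' (2*m+1)
    have n3 := fact_ne' (2*r)
    have p1 : (2*(m:ℝ)+2)*(2*(m:ℝ)+3) ≠ 0 := by positivity
    field_simp
    ring



-- corollary of I1
lemma corI1 (r m : ℕ) (hrm : r ≤ m) :
    ∑ s ∈ Ico r (m+1),
        (-1:ℝ)^s * (2*s).factorial
          / ((m-s).factorial * ((s.factorial : ℝ))^2 * 4^s * (s-r).factorial)
      = (-1)^r * ((2*r).factorial * (2*(m-r)).factorial)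
          / (4^m * r.factorial * (((m-r).factorial : ℝ))^2 * m.factorial) := by
  obtain ⟨n, rfl⟩ : ∃ n, m = r + n := ⟨m - r, by omega⟩
  rw [sum_Ico_eq_sum_range]
  rw [show r + n + 1 - r = n + 1 from by omega]
  have key : ∀ u ∈ range (n+1),
      (-1:ℝ)^(r+u) * (2*(r+u)).factorial
          / (((r+n-(r+u)).factorial : ℝ) * ((r+u).factorial : ℝ)^2 * 4^(r+u) * ((r+u-r).factorial : ℝ))
        = ((-1:ℝ)^r / (4^(r+n) * n.factorial))
            * ((-1:ℝ)^u * 4^(n-u) * (n.choose u) * ((2*(r+u)).choose (r+u))) := by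
    intro u hu
    simp only [mem_range] at hu
    have hun : u ≤ n := by omega
    rw [show r+n-(r+u) = n-u from by omega, show r+u-r = u from by omega]
    rw [Nat.cast_choose ℝ hun, Nat.cast_choose ℝ (show r+u ≤ 2*(r+u) by omega),
      show 2*(r+u)-(r+u) = r+u from by omega]
    have h4 : (4:ℝ)^(r+n) = 4^(r+u) * 4^(n-u) := by
      rw [← pow_add, show r+u+(n-u) = r+n from by omega]
    have hsgn : ((-1:ℝ))^(r+u) = (-1)^r * (-1)^u := by rw [pow_add]
    rw [h4, hsgn]
    have n1 := fact_ne' (n-u); have n2 := fact_ne' ((r+u))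
    have n3 := fact_ne' u; have n4 := fact_ne' n
    have p1 : (4:ℝ)^(r+u) ≠ 0 := by positivity
    have p2 : (4:ℝ)^(n-u) ≠ 0 := by positivity
    field_simp
  rw [sum_congr rfl key, ← mul_sum, identI1 n r]
  rw [show r+n-r = n from by omega]
  have n1 := fact_ne' r; have n2 := fact_ne' n; have n3 := fact_ne' (n+r)
  have n4 := fact_ne' (2*r); have n5 := fact_ne' (2*n); have n6 := fact_ne' (r+n)
  have p1 : (4:ℝ)^(r+n) ≠ 0 := by positivity
  have hfe : ((n+r).factorial : ℝ) = ((r+n).factorial : ℝ) := by rw [Nat.add_comm]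
  rw [hfe]
  field_simp

lemma pochP1 {i m : ℕ} (h : i ≤ m) :
    (ascPochhammer ℝ i).eval (-(m:ℝ)) = (-1)^i * m.factorial / (m-i).factorial := by
  obtain ⟨n, rfl⟩ : ∃ n, m = n + i := ⟨m - i, by omega⟩
  rw [show n+i-i = n from by omega]
  exact pochP1' n i

lemma pochP2s {j m : ℕ} (h : j ≤ m) : (ascPochhammer ℝ j).eval (-(m:ℝ) - 1/2)
    = (-1)^j * (2*m+1).factorial * (m-j).factorial
      / (4^j * m.factorial * (2*(m-j)+1).factorial) := by
  obtain ⟨n, rfl⟩ : ∃ n, m = n + j := ⟨m - j, by omega⟩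
  rw [show n+j-j = n from by omega]
  exact pochP2' n j

lemma pochP3s {j s : ℕ} (h : j ≤ s) : (ascPochhammer ℝ (s-j)).eval ((j:ℝ) + 1/2)
    = (2*s).factorial * j.factorial / (4^(s-j) * s.factorial * (2*j).factorial) := by
  obtain ⟨k, rfl⟩ : ∃ k, s = j + k := ⟨s - j, by omega⟩
  rw [show j+k-j = k from by omega]
  exact pochP3 j k

lemma neg_one_pow_sub {a b : ℕ} (h : b ≤ a) :
    ((-1:ℝ))^(a-b) = (-1)^a * (-1)^b := by
  have : ((-1:ℝ))^(a-b) * ((-1)^b * (-1)^b) = (-1)^a * (-1)^b := by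
    rw [← pow_add, ← pow_add, ← pow_add, show a-b+(b+b) = a+b from by omega]
  rw [← this, ← pow_add, show b+b = 2*b from by omega, pow_mul, neg_one_sq, one_pow, mul_one]

theorem boros_moll_hypergeometric_identity (m : ℕ) (a : ℝ) :
    ∑ j ∈ Finset.range (m + 1), ∑ k ∈ Finset.range (m + 1 - j),
      ((m.factorial : ℝ) /
          (((m - j - k).factorial : ℝ) * (j.factorial : ℝ) * (k.factorial : ℝ))) *
        (ascPochhammer ℝ (m - j - k)).eval (-(m : ℝ)) *
        (ascPochhammer ℝ j).eval (-(m : ℝ) - 1 / 2) *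
        (ascPochhammer ℝ k).eval ((j : ℝ) + 1 / 2) *
        ((a + 1) / 2) ^ j * ((1 - a) / 2) ^ k
    = ∑ i ∈ Finset.range (m + 1),
        ((m.factorial : ℝ) / ((i.factorial : ℝ) * ((m - i).factorial : ℝ))) *
          (ascPochhammer ℝ (m - i)).eval (1 / 2 - ((m - i : ℕ) : ℝ)) *
          (ascPochhammer ℝ i).eval ((m : ℝ) + 1) * ((-a - 1) / 2) ^ i := by
  set x : ℝ := (a+1)/2 with hx
  set T : ℕ → ℕ → ℝ := fun j k =>
    ((m.factorial : ℝ) /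
          (((m - j - k).factorial : ℝ) * (j.factorial : ℝ) * (k.factorial : ℝ))) *
        (ascPochhammer ℝ (m - j - k)).eval (-(m : ℝ)) *
        (ascPochhammer ℝ j).eval (-(m : ℝ) - 1 / 2) *
        (ascPochhammer ℝ k).eval ((j : ℝ) + 1 / 2) with hT
  have inner : ∀ r, r ≤ m →
      ∑ j ∈ range (r+1), ∑ s ∈ Ico r (m+1),
          T j (s-j) * (-1)^(r-j) * (((s-j).choose (r-j) : ℕ) : ℝ)
        = (-1)^m * ((m+r).factorial * (2*(m-r)).factorial)
            / (4^(m-r) * r.factorial * (((m-r).factorial : ℝ))^2) := by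
    intro r hr
    have hterm : ∀ j ∈ range (r+1), ∀ s ∈ Ico r (m+1),
        T j (s-j) * (-1)^(r-j) * (((s-j).choose (r-j) : ℕ):ℝ)
        = ((-1:ℝ)^(m+r) * ((m.factorial:ℝ) * ((2*m+1).factorial:ℝ))) *
          (((((m-j).factorial:ℝ)) / (((r-j).factorial:ℝ) * ((2*j).factorial:ℝ) * ((2*(m-j)+1).factorial:ℝ)))
           * ((-1:ℝ)^s * ((2*s).factorial:ℝ)
              / (((m-s).factorial:ℝ) * ((s.factorial:ℝ))^2 * 4^s * ((s-r).factorial:ℝ)))) := by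
      intro j hj s hs
      simp only [mem_range] at hj
      simp only [mem_Ico] at hs
      have hjr : j ≤ r := by omega
      have hrs : r ≤ s := by omega
      have hsm : s ≤ m := by omega
      simp only [hT]
      rw [show m - j - (s-j) = m - s from by omega]
      rw [pochP1 (show m-s ≤ m by omega), show m-(m-s) = s from by omega]
      rw [pochP2s (show j ≤ m by omega)]
      rw [pochP3s (show j ≤ s by omega)]
      rw [Nat.cast_choose ℝ (show r-j ≤ s-j by omega), show (s-j)-(r-j) = s-r from by omega]
      have hsig : ((-1:ℝ))^(m-s) * ((-1:ℝ)^j * (-1:ℝ)^(r-j)) = (-1:ℝ)^(m+r) * (-1:ℝ)^s := by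
        rw [← pow_add, ← pow_add, show m-s+(j+(r-j)) = (m-s)+r from by omega, ← pow_add,
          show m+r+s = ((m-s)+r)+2*s from by omega, pow_add _ ((m-s)+r) (2*s), pow_mul,
          neg_one_sq, one_pow, mul_one]
      have h4 : (4:ℝ)^(s-j) = 4^s / 4^j := by
        rw [eq_div_iff (by positivity), ← pow_add, show s-j+j = s from by omega]
      have n1 := fact_ne' (m-s); have n2 := fact_ne' j; have n3 := fact_ne' (s-j)
      have n4 := fact_ne' s; have n5 := fact_ne' m; have n6 := fact_ne' (m-j)
      have n7 := fact_ne' (2*(m-j)+1); have n8 := fact_ne' (2*j); have n9 := fact_ne' (r-j)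
      have n10 := fact_ne' (s-r); have n11 := fact_ne' (2*m+1); have n12 := fact_ne' (2*s)
      have p1 : (4:ℝ)^j ≠ 0 := by positivity
      have p2 : (4:ℝ)^s ≠ 0 := by positivity
      calc ((m.factorial : ℝ) / (((m-s).factorial : ℝ) * (j.factorial : ℝ) * ((s-j).factorial : ℝ))) *
            ((-1:ℝ)^(m-s) * (m.factorial : ℝ) / (s.factorial : ℝ)) *
            ((-1:ℝ)^j * ((2*m+1).factorial : ℝ) * ((m-j).factorial : ℝ)
              / (4^j * (m.factorial : ℝ) * ((2*(m-j)+1).factorial : ℝ))) *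
            (((2*s).factorial : ℝ) * (j.factorial : ℝ)
              / (4^(s-j) * (s.factorial : ℝ) * ((2*j).factorial : ℝ))) *
            (-1:ℝ)^(r-j) *
            (((s-j).factorial : ℝ) / (((r-j).factorial : ℝ) * ((s-r).factorial : ℝ)))
          = (((-1:ℝ))^(m-s) * ((-1:ℝ)^j * (-1:ℝ)^(r-j))) *
            ( ((m.factorial:ℝ) / (((m-s).factorial:ℝ) * (j.factorial:ℝ) * ((s-j).factorial:ℝ)))
              * ((m.factorial:ℝ) / (s.factorial:ℝ))
              * (((2*m+1).factorial:ℝ) * ((m-j).factorial:ℝ)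
                  / (4^j * (m.factorial:ℝ) * ((2*(m-j)+1).factorial:ℝ)))
              * (((2*s).factorial:ℝ) * (j.factorial:ℝ)
                  / (4^(s-j) * (s.factorial:ℝ) * ((2*j).factorial:ℝ)))
              * (((s-j).factorial:ℝ) / (((r-j).factorial:ℝ) * ((s-r).factorial:ℝ))) ) := by
            ring
        _ = _ := by
            rw [hsig, h4]
            field_simp
    rw [sum_congr rfl (fun j hj => sum_congr rfl (fun s hs => hterm j hj s hs))]
    have factored : ∑ j ∈ range (r+1), ∑ s ∈ Ico r (m+1),
        (((-1:ℝ)^(m+r) * ((m.factorial:ℝ) * ((2*m+1).factorial:ℝ))) *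
          (((((m-j).factorial:ℝ)) / (((r-j).factorial:ℝ) * ((2*j).factorial:ℝ) * ((2*(m-j)+1).factorial:ℝ)))
           * ((-1:ℝ)^s * ((2*s).factorial:ℝ)
              / (((m-s).factorial:ℝ) * ((s.factorial:ℝ))^2 * 4^s * ((s-r).factorial:ℝ)))))
        = ((-1:ℝ)^(m+r) * ((m.factorial:ℝ) * ((2*m+1).factorial:ℝ))) *
          ((∑ j ∈ range (r+1), (((m-j).factorial:ℝ))
              / (((r-j).factorial:ℝ) * ((2*j).factorial:ℝ) * ((2*(m-j)+1).factorial:ℝ)))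
            * (∑ s ∈ Ico r (m+1), (-1:ℝ)^s * ((2*s).factorial:ℝ)
              / (((m-s).factorial:ℝ) * ((s.factorial:ℝ))^2 * 4^s * ((s-r).factorial:ℝ)))) := by
      rw [sum_mul_sum, mul_sum]
      refine sum_congr rfl fun j _ => ?_
      rw [mul_sum]
    rw [factored, identI2 r m hr, corI1 r m hr]
    have hsgn2 : ((-1:ℝ))^(m+r) * (-1:ℝ)^r = (-1:ℝ)^m := by
      rw [← pow_add, show m+r+r = m+2*r from by omega, pow_add, pow_mul, neg_one_sq,
        one_pow, mul_one]
    have h4b : (4:ℝ)^(m-r) = 4^m / 4^r := by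
      rw [eq_div_iff (by positivity), ← pow_add, show m-r+r = m from by omega]
    have n1 := fact_ne' r; have n2 := fact_ne' (m-r); have n3 := fact_ne' m
    have n4 := fact_ne' (2*r); have n5 := fact_ne' (2*m+1); have n6 := fact_ne' (m+r)
    have n7 := fact_ne' (2*(m-r))
    have p1 : (4:ℝ)^r ≠ 0 := by positivity
    have p2 : (4:ℝ)^m ≠ 0 := by positivity
    calc ((-1:ℝ)^(m+r) * ((m.factorial:ℝ) * ((2*m+1).factorial:ℝ))) *
          ((4^r * ((m+r).factorial:ℝ) / (((2*r).factorial:ℝ) * ((2*m+1).factorial:ℝ)))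
            * ((-1:ℝ)^r * (((2*r).factorial:ℝ) * ((2*(m-r)).factorial:ℝ))
              / (4^m * (r.factorial:ℝ) * (((m-r).factorial:ℝ))^2 * (m.factorial:ℝ))))
        = ((-1:ℝ)^(m+r) * (-1:ℝ)^r) *
          (((m.factorial:ℝ) * ((2*m+1).factorial:ℝ)) *
            ((4^r * ((m+r).factorial:ℝ) / (((2*r).factorial:ℝ) * ((2*m+1).factorial:ℝ)))
              * ((((2*r).factorial:ℝ) * ((2*(m-r)).factorial:ℝ))
                / (4^m * (r.factorial:ℝ) * (((m-r).factorial:ℝ))^2 * (m.factorial:ℝ))))) := by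
          ring
      _ = _ := by
          rw [hsgn2, h4b]
          field_simp
  have hbin : ∀ k : ℕ, ((1-a)/2)^k = ∑ t ∈ range (k+1), (-1:ℝ)^t * x^t * (k.choose t) := by
    intro k
    rw [show (1-a)/2 = -x + 1 from by rw [hx]; ring, add_pow]
    refine sum_congr rfl fun t ht => ?_
    rw [neg_pow, one_pow]
    ring
  have step1 : ∑ j ∈ Finset.range (m + 1), ∑ k ∈ Finset.range (m + 1 - j),
      T j k * ((a + 1) / 2) ^ j * ((1 - a) / 2) ^ k
      = ∑ j ∈ range (m+1), ∑ k ∈ range (m+1-j), ∑ t ∈ range (k+1),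
          T j k * (-1)^t * ((k.choose t):ℝ) * x^(j+t) := by
    refine sum_congr rfl fun j hj => sum_congr rfl fun k hk => ?_
    rw [hbin k, ← hx, mul_sum]
    refine sum_congr rfl fun t ht => ?_
    rw [pow_add]
    ring
  have step2 : ∑ j ∈ range (m+1), ∑ k ∈ range (m+1-j), ∑ t ∈ range (k+1),
        T j k * (-1)^t * ((k.choose t):ℝ) * x^(j+t)
      = ∑ p ∈ (range (m+1)).sigma (fun j => (range (m+1-j)).sigma (fun k => range (k+1))),
          T p.1 p.2.1 * (-1)^p.2.2 * ((p.2.1.choose p.2.2):ℝ) * x^(p.1+p.2.2) := by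
    rw [sum_sigma]
    refine sum_congr rfl fun j hj => ?_
    rw [sum_sigma]
  have step3 : ∑ p ∈ (range (m+1)).sigma (fun j => (range (m+1-j)).sigma (fun k => range (k+1))),
        T p.1 p.2.1 * (-1)^p.2.2 * ((p.2.1.choose p.2.2):ℝ) * x^(p.1+p.2.2)
      = ∑ q ∈ (range (m+1)).sigma (fun r => (range (r+1)).sigma (fun _ => Ico r (m+1))),
          T q.2.1 (q.2.2-q.2.1) * (-1)^(q.1-q.2.1) * (((q.2.2-q.2.1).choose (q.1-q.2.1)):ℝ)
            * x^q.1 := by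
    refine sum_nbij' (i := fun p => (⟨p.1 + p.2.2, ⟨p.1, p.1 + p.2.1⟩⟩ :
        (_ : ℕ) × (_ : ℕ) × ℕ))
      (j := fun q => (⟨q.2.1, ⟨q.2.2 - q.2.1, q.1 - q.2.1⟩⟩ : (_ : ℕ) × (_ : ℕ) × ℕ))
      ?_ ?_ ?_ ?_ ?_
    · intro p hp
      simp only [mem_sigma, mem_range, mem_Ico] at hp ⊢
      omega
    · intro q hq
      simp only [mem_sigma, mem_range, mem_Ico] at hq ⊢
      omega
    · intro p hp
      rcases p with ⟨j, k, t⟩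
      simp only [mem_sigma, mem_range, mem_Ico] at hp
      simp only [Nat.add_sub_cancel_left]
    · intro q hq
      rcases q with ⟨r, j, s⟩
      simp only [mem_sigma, mem_range, mem_Ico] at hq
      simp only []
      rw [show j + (r-j) = r from by omega, show j + (s-j) = s from by omega]
    · intro p hp
      simp only [mem_sigma, mem_range, mem_Ico] at hp
      rw [Nat.add_sub_cancel_left, Nat.add_sub_cancel_left]
  have step4 : ∑ q ∈ (range (m+1)).sigma (fun r => (range (r+1)).sigma (fun _ => Ico r (m+1))),
        T q.2.1 (q.2.2-q.2.1) * (-1)^(q.1-q.2.1) * (((q.2.2-q.2.1).choose (q.1-q.2.1)):ℝ)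
          * x^q.1
      = ∑ r ∈ range (m+1),
          (∑ j ∈ range (r+1), ∑ s ∈ Ico r (m+1),
            T j (s-j) * (-1)^(r-j) * (((s-j).choose (r-j)):ℝ)) * x^r := by
    rw [sum_sigma]
    refine sum_congr rfl fun r hr => ?_
    rw [sum_sigma, sum_mul]
    refine sum_congr rfl fun j hj => ?_
    rw [sum_mul]
  rw [step1, step2, step3, step4]
  refine sum_congr rfl fun r hr => ?_
  simp only [mem_range] at hr
  have hrm : r ≤ m := by omega
  rw [inner r hrm]
  rw [pochP4 (m-r), pochP5 m r]
  rw [show (-a-1)/2 = -x from by rw [hx]; ring, neg_pow x r]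
  have e1 : ((-1:ℝ))^m = (-1)^(m-r) * (-1)^r := by
    rw [← pow_add, show m-r+r = m from by omega]
  have n1 := fact_ne' r; have n2 := fact_ne' (m-r); have n3 := fact_ne' m
  have p1 : (4:ℝ)^(m-r) ≠ 0 := by positivity
  rw [e1]
  field_simp
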